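/- Let V and H be real Hilbert spaces and G : V → H a continuous linear map, and define the energy bilinear form a(v, w) := ⟨Gv, Gw⟩_H + ⟨v, w⟩_V. Let F : V → ℝ be a continuous linear functional, u ∈ V the exact solution with a(u, v) = F(v) for all v ∈ V, and u_h ∈ V arbitrary. Suppose (σ, d) ∈ H × V is an equilibrated dual pair, i.e. ⟨σ, Gv⟩_H + ⟨d, v⟩_V = F(v) for all v ∈ V. Then the energy-norm error satisfies the fully computable, constant-free bound a(u − u_h, u − u_h) ≤ ‖σ − G u_h‖²_H + ‖d − u_h‖²_V. -/

import Mathlib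

/-- Abstract complementary-energy (hypercircle) bound: with
`a(v,w) = ⟪Gv, Gw⟫ + ⟪v, w⟫`, exact solution `u` of `a(u, ·) = F(·)`,
arbitrary `u_h`, and any equilibrated dual pair `(σ, d)` with
`⟪σ, Gv⟫ + ⟪d, v⟫ = F(v)` for all `v`, the energy error satisfies the fully
computable, constant-free bound
`a(u - u_h, u - u_h) ≤ ‖σ - G u_h‖² + ‖d - u_h‖²`. -/
theorem stmt_12 {V H : Type*} [NormedAddCommGroup V] [InnerProductSpace ℝ V]
    [CompleteSpace V] [NormedAddCommGroup H] [InnerProductSpace ℝ H]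
    [CompleteSpace H] (G : V →L[ℝ] H) (a : V → V → ℝ)
    (ha : ∀ v w : V, a v w = inner (𝕜 := ℝ) (G v) (G w) + inner (𝕜 := ℝ) v w)
    (F : V →L[ℝ] ℝ) (u : V) (hu : ∀ v : V, a u v = F v) (uh : V)
    (σ : H) (d : V)
    (hfeas : ∀ v : V, inner (𝕜 := ℝ) σ (G v) + inner (𝕜 := ℝ) d v = F v) :
    a (u - uh) (u - uh) ≤ ‖σ - G uh‖ ^ 2 + ‖d - uh‖ ^ 2 := by
  set e := u - uh with he
  have hE : a e e = ‖G e‖ ^ 2 + ‖e‖ ^ 2 := by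
    rw [ha, real_inner_self_eq_norm_sq, real_inner_self_eq_norm_sq]
  have hEnn : 0 ≤ a e e := by rw [hE]; positivity
  have hsplit : a e e = inner (𝕜 := ℝ) (σ - G uh) (G e) + inner (𝕜 := ℝ) (d - uh) e := by
    have h1 : a e e = F e - a uh e := by
      rw [← hu e, ha, ha, ha, he]
      simp [map_sub, inner_sub_left]
      simp only [← real_inner_self_eq_norm_sq, inner_sub_left]
      ring
    rw [h1, ← hfeas e, ha, inner_sub_left, inner_sub_left]
    ring
  have hcs1 : inner (𝕜 := ℝ) (σ - G uh) (G e) ≤ ‖σ - G uh‖ * ‖G e‖ :=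
    real_inner_le_norm _ _
  have hcs2 : inner (𝕜 := ℝ) (d - uh) e ≤ ‖d - uh‖ * ‖e‖ :=
    real_inner_le_norm _ _
  have hbound : a e e ≤ ‖σ - G uh‖ * ‖G e‖ + ‖d - uh‖ * ‖e‖ := by
    rw [hsplit]; linarith
  have hsq : (a e e) ^ 2 ≤ (‖σ - G uh‖ ^ 2 + ‖d - uh‖ ^ 2) * (a e e) := by
    have h2 : (‖σ - G uh‖ * ‖G e‖ + ‖d - uh‖ * ‖e‖) ^ 2 ≤
        (‖σ - G uh‖ ^ 2 + ‖d - uh‖ ^ 2) * (‖G e‖ ^ 2 + ‖e‖ ^ 2) := by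
      nlinarith [sq_nonneg (‖σ - G uh‖ * ‖e‖ - ‖d - uh‖ * ‖G e‖)]
    have h3 : 0 ≤ ‖σ - G uh‖ * ‖G e‖ + ‖d - uh‖ * ‖e‖ := le_trans hEnn hbound
    calc (a e e) ^ 2 ≤ (‖σ - G uh‖ * ‖G e‖ + ‖d - uh‖ * ‖e‖) ^ 2 := by
          exact pow_le_pow_left₀ hEnn hbound 2
      _ ≤ (‖σ - G uh‖ ^ 2 + ‖d - uh‖ ^ 2) * (‖G e‖ ^ 2 + ‖e‖ ^ 2) := h2
      _ = (‖σ - G uh‖ ^ 2 + ‖d - uh‖ ^ 2) * (a e e) := by rw [hE]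
  rcases eq_or_lt_of_le hEnn with h | h
  · rw [← h]; positivity
  · exact le_of_mul_le_mul_right (by nlinarith) h
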